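/- (Lemma A.1, soundness of the projection.) Let α be a sorted (dis)equality conjunction, w̄ a finite set of variables, and s a stack. If s ⊨ α then s ⊨ Π(α, w̄). -/

import Mathlib

/-- An atom of a (dis)equality conjunction: `v₁ = v₂` or `v₁ ≠ v₂`. -/
inductive Atom (Var : Type) where
  | eq : Var → Var → Atom Var
  | ne : Var → Var → Atom Var

/-- A (dis)equality conjunction: a finite list of atoms, read conjunctively. -/
abbrev Conj (Var : Type) := List (Atom Var)

/-- A stack: a partial function from variables to values. -/
abbrev Stack (Var Val : Type) := Var → Option Val

/-- `s'` extends `s`: `s'` agrees with `s` on the domain of `s`. -/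
def Extends {Var Val : Type} (s s' : Stack Var Val) : Prop :=
  ∀ v x, s v = some x → s' v = some x

/-- An atom holds under a stack: both its variables lie in the domain of the
stack and the (dis)equality is true under the stack. -/
def Atom.holds {Var Val : Type} (s : Stack Var Val) : Atom Var → Prop
  | .eq v₁ v₂ => ∃ a b, s v₁ = some a ∧ s v₂ = some b ∧ a = b
  | .ne v₁ v₂ => ∃ a b, s v₁ = some a ∧ s v₂ = some b ∧ a ≠ b

/-- `s ⊨ α`: every variable occurring in `α` lies in the domain of `s` and every
atom of `α` is true under `s`. -/
def Conj.sat {Var Val : Type} (s : Stack Var Val) (α : Conj Var) : Prop :=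
  ∀ a ∈ α, a.holds s

/-- Substitute `v₂` for (every occurrence of) `v₁` in a variable. -/
def substVar {Var : Type} [DecidableEq Var] (v₁ v₂ u : Var) : Var :=
  if u = v₁ then v₂ else u

/-- Substitute `v₂` for `v₁` in an atom. -/
def Atom.subst {Var : Type} [DecidableEq Var] (v₁ v₂ : Var) : Atom Var → Atom Var
  | .eq a b => .eq (substVar v₁ v₂ a) (substVar v₁ v₂ b)
  | .ne a b => .ne (substVar v₁ v₂ a) (substVar v₁ v₂ b)

/-- `α[v₂/v₁]`: substitute `v₂` for every occurrence of `v₁` in `α`. -/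
def Conj.subst {Var : Type} [DecidableEq Var] (v₁ v₂ : Var) (α : Conj Var) : Conj Var :=
  α.map (Atom.subst v₁ v₂)

/-- `α` is sorted: all equality atoms precede all disequality atoms. -/
def Conj.Sorted {Var : Type} (α : Conj Var) : Prop :=
  ∃ es ds : Conj Var,
    (∀ a ∈ es, ∃ v₁ v₂, a = Atom.eq v₁ v₂) ∧
    (∀ a ∈ ds, ∃ v₁ v₂, a = Atom.ne v₁ v₂) ∧
    α = es ++ ds

/-- The projection `Π(α, w̄)` eliminating the existentially quantified variables `w̄`;
the result `none` represents the formula `false`. -/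
def proj {Var : Type} [DecidableEq Var] (w : Finset Var) : Conj Var → Option (Conj Var)
  | [] => some []
  | (Atom.eq v₁ v₂) :: rest =>
      if v₁ ∈ w then proj w (Conj.subst v₁ v₂ rest)
      else if v₂ ∈ w then proj w (Conj.subst v₂ v₁ rest)
      else (proj w rest).map (fun r => Atom.eq v₁ v₂ :: r)
  | (Atom.ne v₁ v₂) :: rest =>
      if v₁ = v₂ then none
      else if v₁ ∈ w ∨ v₂ ∈ w then proj w rest
      else (proj w rest).map (fun r => Atom.ne v₁ v₂ :: r)
termination_by α => α.length
decreasing_by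
  all_goals simp [Conj.subst]

/-- Satisfaction for the (possibly `false`) result of the projection. -/
def satP {Var Val : Type} (s : Stack Var Val) : Option (Conj Var) → Prop
  | none => False
  | some α => α.sat s


lemma sat_subst {Var Val : Type} [DecidableEq Var] {s : Stack Var Val} {v₁ v₂ : Var}
    (h : s v₁ = s v₂) {α : Conj Var} (hs : α.sat s) : (Conj.subst v₁ v₂ α).sat s := by
  intro a ha
  simp only [Conj.subst, List.mem_map] at ha
  obtain ⟨b, hb, rfl⟩ := ha
  have key : ∀ u, s (substVar v₁ v₂ u) = s u := by
    intro u; unfold substVar; split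
    · subst u; exact h.symm
    · rfl
  have hb := hs b hb
  cases b with
  | eq a b =>
    obtain ⟨x, y, hx, hy, hxy⟩ := hb
    exact ⟨x, y, (key a).trans hx, (key b).trans hy, hxy⟩
  | ne a b =>
    obtain ⟨x, y, hx, hy, hxy⟩ := hb
    exact ⟨x, y, (key a).trans hx, (key b).trans hy, hxy⟩

/-- Lemma A.1, soundness of the projection: if a stack `s` satisfies a
sorted (dis)equality conjunction `α`, then `s` satisfies `Π(α, w̄)`. -/
theorem proj_sound
    {Var Val : Type} [DecidableEq Var] [Countable Var] [Infinite Var] [Infinite Val]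
    (α : Conj Var) (hsorted : α.Sorted) (w : Finset Var) (s : Stack Var Val)
    (hsat : α.sat s) :
    satP s (proj w α) := by
  clear hsorted
  induction α using proj.induct w with
  | case1 => rw [proj]; exact fun a ha => absurd ha List.not_mem_nil
  | case2 v₁ v₂ rest h1 ih =>
    have heq : s v₁ = s v₂ := by
      obtain ⟨x, y, hx, hy, rfl⟩ := hsat (Atom.eq v₁ v₂) (by simp)
      rw [hx, hy]
    have hrest : Conj.sat s rest := fun a ha => hsat a (List.mem_cons_of_mem _ ha)
    rw [proj, if_pos h1]
    exact ih (sat_subst heq hrest)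
  | case3 v₁ v₂ rest h1 h2 ih =>
    have heq : s v₁ = s v₂ := by
      obtain ⟨x, y, hx, hy, rfl⟩ := hsat (Atom.eq v₁ v₂) (by simp)
      rw [hx, hy]
    have hrest : Conj.sat s rest := fun a ha => hsat a (List.mem_cons_of_mem _ ha)
    rw [proj, if_neg h1, if_pos h2]
    exact ih (sat_subst heq.symm hrest)
  | case4 v₁ v₂ rest h1 h2 ih =>
    have hrest : Conj.sat s rest := fun a ha => hsat a (List.mem_cons_of_mem _ ha)
    rw [proj, if_neg h1, if_neg h2]
    have := ih hrest
    cases hp : proj w rest with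
    | none => rw [hp] at this; exact this
    | some r =>
      rw [hp] at this
      simp only [Option.map_some, satP]
      intro a ha
      rcases List.mem_cons.mp ha with rfl | ha
      · exact hsat _ (by simp)
      · exact this a ha
  | case5 v₂ rest =>
    obtain ⟨x, y, hx, hy, hxy⟩ := hsat (Atom.ne v₂ v₂) (by simp)
    rw [hx] at hy; exact absurd (Option.some.inj hy) hxy
  | case6 v₁ v₂ rest h1 h2 ih =>
    have hrest : Conj.sat s rest := fun a ha => hsat a (List.mem_cons_of_mem _ ha)
    rw [proj, if_neg h1, if_pos h2]
    exact ih hrest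
  | case7 v₁ v₂ rest h1 h2 ih =>
    have hrest : Conj.sat s rest := fun a ha => hsat a (List.mem_cons_of_mem _ ha)
    rw [proj, if_neg h1, if_neg h2]
    have := ih hrest
    cases hp : proj w rest with
    | none => rw [hp] at this; exact this
    | some r =>
      rw [hp] at this
      simp only [Option.map_some, satP]
      intro a ha
      rcases List.mem_cons.mp ha with rfl | ha
      · exact hsat _ (by simp)
      · exact this a ha
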